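/- Let (Ω, μ) be a probability space, T : Ω → Ω an ergodic measure-preserving transformation, 0 < p < 1, and f : Ω → ℝ a measurable function with ∫_Ω |f|^p dμ < ∞. Then for μ-a.e. ω ∈ Ω, lim_{N→∞} N^{−1/p} ( f(ω) + f(Tω) + ⋯ + f(T^{N−1}ω) ) = 0. -/

import Mathlib

open MeasureTheory Filter Topology ENNReal

set_option linter.unusedSectionVars false

namespace MZAux

variable {Ω : Type*} [MeasurableSpace Ω] {μ : Measure Ω} {T : Ω → Ω}

noncomputable def birk (T : Ω → Ω) (g : Ω → ℝ) (n : ℕ) (ω : Ω) : ℝ :=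
  ∑ i ∈ Finset.range n, g (T^[i] ω)

lemma birk_succ' (T : Ω → Ω) (g : Ω → ℝ) (n : ℕ) (ω : Ω) :
    birk T g (n + 1) ω = g ω + birk T g n (T ω) := by
  simp only [birk, Finset.sum_range_succ']
  simp [Function.iterate_succ_apply, add_comm]

noncomputable def psi (T : Ω → Ω) (g : Ω → ℝ) : ℕ → Ω → ℝ
  | 0 => fun _ => 0
  | (N + 1) => fun ω => max 0 (g ω + psi T g N (T ω))

lemma psi_nonneg (g : Ω → ℝ) (N : ℕ) (ω : Ω) : 0 ≤ psi T g N ω := by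
  cases N with
  | zero => simp [psi]
  | succ N => exact le_max_left _ _

lemma psi_mono (g : Ω → ℝ) (N : ℕ) (ω : Ω) : psi T g N ω ≤ psi T g (N + 1) ω := by
  induction N generalizing ω with
  | zero => exact psi_nonneg g 1 ω
  | succ N ih =>
      show max 0 (g ω + psi T g N (T ω)) ≤ max 0 (g ω + psi T g (N + 1) (T ω))
      exact max_le_max le_rfl (by linarith [ih (T ω)])

lemma birk_le_psi (g : Ω → ℝ) (N : ℕ) (ω : Ω) : birk T g N ω ≤ psi T g N ω := by
  induction N generalizing ω with
  | zero => simp [birk, psi]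
  | succ N ih =>
      rw [birk_succ']
      exact le_trans (by linarith [ih (T ω)]) (le_max_right _ _)

lemma psi_measurable (hT : Measurable T) {g : Ω → ℝ} (hg : Measurable g) (N : ℕ) :
    Measurable (psi T g N) := by
  induction N with
  | zero => simpa [psi] using measurable_const
  | succ N ih => exact measurable_const.max (hg.add (ih.comp hT))

lemma psi_integrable (hT : MeasurePreserving T μ μ) {g : Ω → ℝ} (hgm : Measurable g)
    (hg : Integrable g μ) (N : ℕ) : Integrable (psi T g N) μ := by
  induction N with
  | zero => simpa [psi] using (integrable_zero Ω ℝ μ)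
  | succ N ih =>
      have hcomp : Integrable (fun ω => psi T g N (T ω)) μ :=
        (hT.integrable_comp (psi_measurable hT.measurable hgm N).aestronglyMeasurable).mpr ih
      have : Integrable (fun ω => max 0 (g ω + psi T g N (T ω))) μ := by
        exact (integrable_zero Ω ℝ μ).sup (hg.add hcomp)
      exact this

/-- Garsia's maximal ergodic lemma. -/
lemma maximal (hT : MeasurePreserving T μ μ) {g : Ω → ℝ} (hgm : Measurable g)
    (hg : Integrable g μ) (N : ℕ) :
    0 ≤ ∫ ω in {ω | 0 < psi T g N ω}, g ω ∂μ := by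
  rcases N with _ | N
  · simp [psi]
  set ψ := psi T g (N + 1) with hψ
  have hψm : Measurable ψ := psi_measurable hT.measurable hgm (N + 1)
  have hψi : Integrable ψ μ := psi_integrable hT hgm hg (N + 1)
  have hψTi : Integrable (fun ω => ψ (T ω)) μ :=
    (hT.integrable_comp hψm.aestronglyMeasurable).mpr hψi
  set E : Set Ω := {ω | 0 < ψ ω} with hE
  have hEm : MeasurableSet E := measurableSet_lt measurable_const hψm
  -- key pointwise inequality on E
  have key : ∀ ω ∈ E, ψ ω - ψ (T ω) ≤ g ω := by
    intro ω hω
    have hωpos : 0 < ψ ω := hω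
    have h1 : ψ ω = g ω + psi T g N (T ω) := by
      have hdef : ψ ω = max 0 (g ω + psi T g N (T ω)) := rfl
      by_cases hx : 0 < g ω + psi T g N (T ω)
      · rw [hdef, max_eq_right hx.le]
      · push_neg at hx
        rw [hdef, max_eq_left hx] at hωpos
        exact absurd hωpos (lt_irrefl 0)
    have h2 : psi T g N (T ω) ≤ ψ (T ω) := psi_mono g N (T ω)
    linarith
  have int_comp : ∫ ω, ψ (T ω) ∂μ = ∫ ω, ψ ω ∂μ := by
    rw [← integral_map hT.measurable.aemeasurable hψm.aestronglyMeasurable, hT.map_eq]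
  have h1 : ∫ ω in E, (ψ ω - ψ (T ω)) ∂μ ≤ ∫ ω in E, g ω ∂μ := by
    refine setIntegral_mono_on (hψi.sub hψTi).integrableOn hg.integrableOn hEm ?_
    exact key
  have h2 : ∫ ω in E, ψ ω ∂μ = ∫ ω, ψ ω ∂μ := by
    rw [← integral_add_compl hEm hψi]
    have : ∫ ω in Eᶜ, ψ ω ∂μ = 0 := by
      refine setIntegral_eq_zero_of_forall_eq_zero ?_
      intro ω hω
      have h0 : ¬ 0 < ψ ω := hω
      exact le_antisymm (not_lt.1 h0) (psi_nonneg g (N + 1) ω)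
    rw [this, add_zero]
  have h3 : ∫ ω in E, ψ (T ω) ∂μ ≤ ∫ ω, ψ (T ω) ∂μ :=
    setIntegral_le_integral hψTi (Filter.Eventually.of_forall fun ω => psi_nonneg g (N + 1) (T ω))
  have h4 : ∫ ω in E, (ψ ω - ψ (T ω)) ∂μ
      = ∫ ω in E, ψ ω ∂μ - ∫ ω in E, ψ (T ω) ∂μ :=
    integral_sub hψi.integrableOn hψTi.integrableOn
  linarith [h1, h4, h2, h3, int_comp]


lemma limsup_add_le_ennreal (x y : ℕ → ℝ≥0∞) :
    Filter.limsup (fun n => x n + y n) atTop ≤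
      Filter.limsup x atTop + Filter.limsup y atTop := by
  set A := Filter.limsup x atTop
  set B := Filter.limsup y atTop
  rcases eq_or_ne A ⊤ with hA | hA
  · simp [hA]
  rcases eq_or_ne B ⊤ with hB | hB
  · simp [hB]
  refine ENNReal.le_of_forall_pos_le_add fun ε hε _ => ?_
  have hδ : (0 : ℝ≥0∞) < (ε : ℝ≥0∞) / 2 := by
    simp [ENNReal.div_pos_iff, hε.ne']
  have hx : ∀ᶠ n in atTop, x n < A + (ε : ℝ≥0∞) / 2 :=
    eventually_lt_of_limsup_lt (ENNReal.lt_add_right hA hδ.ne')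
  have hy : ∀ᶠ n in atTop, y n < B + (ε : ℝ≥0∞) / 2 :=
    eventually_lt_of_limsup_lt (ENNReal.lt_add_right hB hδ.ne')
  have : ∀ᶠ n in atTop, x n + y n ≤ A + B + (ε : ℝ≥0∞) := by
    filter_upwards [hx, hy] with n h1 h2
    calc x n + y n ≤ (A + (ε : ℝ≥0∞) / 2) + (B + (ε : ℝ≥0∞) / 2) :=
          add_le_add h1.le h2.le
      _ = A + B + ((ε : ℝ≥0∞) / 2 + (ε : ℝ≥0∞) / 2) := by ring
      _ = A + B + (ε : ℝ≥0∞) := by rw [ENNReal.add_halves]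
  exact limsup_le_of_le (by isBoundedDefault) this

lemma tendsto_succ_div_ennreal :
    Tendsto (fun n : ℕ => ((n : ℝ≥0∞) + 1) / (n : ℝ≥0∞)) atTop (𝓝 1) := by
  have h0 : Tendsto (fun n : ℕ => ((n : ℝ≥0∞))⁻¹) atTop (𝓝 0) :=
    ENNReal.tendsto_inv_nat_nhds_zero
  have h1 : Tendsto (fun n : ℕ => 1 + ((n : ℝ≥0∞))⁻¹) atTop (𝓝 1) := by
    have := Tendsto.const_add (1 : ℝ≥0∞) h0
    simpa using this
  refine h1.congr' ?_
  filter_upwards [eventually_ge_atTop 1] with n hn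
  have hn0 : (n : ℝ≥0∞) ≠ 0 := Nat.cast_ne_zero.mpr (by omega)
  rw [ENNReal.add_div, ENNReal.div_self hn0 (by simp), one_div]

lemma div_mul_div_cancel_ennreal (a b d : ℝ≥0∞) (hb0 : b ≠ 0) (hbt : b ≠ ⊤) :
    a / b * (b / d) = a / d := by
  rw [div_eq_mul_inv, div_eq_mul_inv, div_eq_mul_inv, mul_assoc,
    ← mul_assoc b⁻¹, ENNReal.inv_mul_cancel hb0 hbt, one_mul]

lemma limsup_shift (c : ℝ≥0∞) (hc : c ≠ ⊤) (v : ℕ → ℝ≥0∞) :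
    Filter.limsup (fun n : ℕ => (c + v n) / ((n : ℝ≥0∞) + 1)) atTop =
      Filter.limsup (fun n : ℕ => v n / (n : ℝ≥0∞)) atTop := by
  have hr : Filter.limsup (fun n : ℕ => ((n : ℝ≥0∞) + 1) / (n : ℝ≥0∞)) atTop = 1 :=
    tendsto_succ_div_ennreal.limsup_eq
  have hc0 : Tendsto (fun n : ℕ => c / ((n : ℝ≥0∞) + 1)) atTop (𝓝 0) := by
    have h0 : Tendsto (fun n : ℕ => ((n : ℝ≥0∞) + 1)⁻¹) atTop (𝓝 0) := by
      have := (ENNReal.tendsto_inv_nat_nhds_zero).comp (tendsto_add_atTop_nat 1)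
      refine this.congr fun n => ?_
      simp [Function.comp]
    have := ENNReal.Tendsto.const_mul h0 (Or.inr hc)
    simpa [div_eq_mul_inv, mul_zero] using this
  apply le_antisymm
  · -- limsup t ≤ limsup w
    have step : ∀ n : ℕ, (c + v n) / ((n : ℝ≥0∞) + 1) ≤
        c / ((n : ℝ≥0∞) + 1) + v n / (n : ℝ≥0∞) := by
      intro n
      rw [ENNReal.add_div]
      refine add_le_add le_rfl (ENNReal.div_le_div le_rfl ?_)
      exact le_add_right le_rfl -- (n : ℝ≥0∞) ≤ n + 1
    calc Filter.limsup (fun n : ℕ => (c + v n) / ((n : ℝ≥0∞) + 1)) atTop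
        ≤ Filter.limsup (fun n : ℕ => c / ((n : ℝ≥0∞) + 1) + v n / (n : ℝ≥0∞)) atTop :=
          limsup_le_limsup (Eventually.of_forall step)
      _ ≤ Filter.limsup (fun n : ℕ => c / ((n : ℝ≥0∞) + 1)) atTop +
            Filter.limsup (fun n : ℕ => v n / (n : ℝ≥0∞)) atTop :=
          limsup_add_le_ennreal _ _
      _ = Filter.limsup (fun n : ℕ => v n / (n : ℝ≥0∞)) atTop := by
          rw [hc0.limsup_eq, zero_add]
  · -- limsup w ≤ limsup t
    have step : ∀ᶠ n : ℕ in atTop, v n / (n : ℝ≥0∞) ≤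
        ((c + v n) / ((n : ℝ≥0∞) + 1)) * (((n : ℝ≥0∞) + 1) / (n : ℝ≥0∞)) := by
      filter_upwards [eventually_ge_atTop 1] with n hn
      rw [div_mul_div_cancel_ennreal (c + v n) ((n : ℝ≥0∞) + 1) (n : ℝ≥0∞) (by simp) (by simp [ENNReal.add_ne_top])]
      exact ENNReal.div_le_div (le_add_left le_rfl) le_rfl
    calc Filter.limsup (fun n : ℕ => v n / (n : ℝ≥0∞)) atTop
        ≤ Filter.limsup (fun n : ℕ => ((c + v n) / ((n : ℝ≥0∞) + 1)) *
            (((n : ℝ≥0∞) + 1) / (n : ℝ≥0∞))) atTop := limsup_le_limsup step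
      _ ≤ Filter.limsup (fun n : ℕ => (c + v n) / ((n : ℝ≥0∞) + 1)) atTop *
            Filter.limsup (fun n : ℕ => ((n : ℝ≥0∞) + 1) / (n : ℝ≥0∞)) atTop := by
          refine ENNReal.limsup_mul_le' ?_ ?_ <;> rw [hr] <;> simp
      _ = Filter.limsup (fun n : ℕ => (c + v n) / ((n : ℝ≥0∞) + 1)) atTop := by
          rw [hr, mul_one]


lemma birk_nonneg {g : Ω → ℝ} (hg0 : ∀ ω, 0 ≤ g ω) (n : ℕ) (ω : Ω) :
    0 ≤ birk T g n ω :=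
  Finset.sum_nonneg fun i _ => hg0 _

/-- The normalized Birkhoff limsup, valued in `ℝ≥0∞`. -/
noncomputable def LS (T : Ω → Ω) (g : Ω → ℝ) (ω : Ω) : ℝ≥0∞ :=
  Filter.limsup (fun n : ℕ => ENNReal.ofReal (birk T g n ω) / (n : ℝ≥0∞)) atTop

lemma LS_comp {g : Ω → ℝ} (hg0 : ∀ ω, 0 ≤ g ω) (ω : Ω) :
    LS T g (T ω) = LS T g ω := by
  unfold LS
  have key : ∀ n : ℕ, ENNReal.ofReal (birk T g (n + 1) ω) =
      ENNReal.ofReal (g ω) + ENNReal.ofReal (birk T g n (T ω)) := by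
    intro n
    rw [birk_succ', ENNReal.ofReal_add (hg0 ω) (birk_nonneg hg0 n (T ω))]
  calc Filter.limsup (fun n : ℕ => ENNReal.ofReal (birk T g n (T ω)) / (n : ℝ≥0∞)) atTop
      = Filter.limsup (fun n : ℕ => (ENNReal.ofReal (g ω) +
          ENNReal.ofReal (birk T g n (T ω))) / ((n : ℝ≥0∞) + 1)) atTop :=
        (limsup_shift _ ENNReal.ofReal_ne_top _).symm
    _ = Filter.limsup (fun n : ℕ =>
          ENNReal.ofReal (birk T g (n + 1) ω) / (((n + 1 : ℕ)) : ℝ≥0∞)) atTop := by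
        apply Filter.limsup_congr
        refine Eventually.of_forall fun n => ?_
        rw [key n, Nat.cast_add_one]
    _ = Filter.limsup (fun n : ℕ => ENNReal.ofReal (birk T g n ω) / (n : ℝ≥0∞)) atTop :=
        Filter.limsup_nat_add (fun m : ℕ => ENNReal.ofReal (birk T g m ω) / (m : ℝ≥0∞)) 1

lemma birk_measurable (hT : Measurable T) {g : Ω → ℝ} (hg : Measurable g) (n : ℕ) :
    Measurable (birk T g n) :=
  Finset.measurable_sum _ fun i _ => hg.comp (hT.iterate i)

lemma LS_measurable (hT : Measurable T) {g : Ω → ℝ} (hg : Measurable g) :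
    Measurable (LS T g) := by
  apply Measurable.limsup
  intro n
  exact (ENNReal.measurable_ofReal.comp (birk_measurable hT hg n)).div measurable_const


lemma lam_le [IsProbabilityMeasure μ] (hT : Ergodic T μ) {g : Ω → ℝ}
    (hgm : Measurable g) (hg : Integrable g μ) (hg0 : ∀ ω, 0 ≤ g ω)
    {lam : ℝ} (hlam : 0 < lam)
    (h1 : μ {ω | ENNReal.ofReal lam < LS T g ω} = 1) : lam ≤ ∫ x, g x ∂μ := by
  classical
  set g' : Ω → ℝ := fun ω => g ω - lam with hg'
  have hg'm : Measurable g' := hgm.sub measurable_const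
  have hg'i : Integrable g' μ := hg.sub (integrable_const lam)
  set E : ℕ → Set Ω := fun N => {ω | 0 < psi T g' N ω} with hEdef
  have hEm : ∀ N, MeasurableSet (E N) := fun N =>
    measurableSet_lt measurable_const (psi_measurable hT.measurable hg'm N)
  have hEmono : Monotone E := by
    refine monotone_nat_of_le_succ fun N => ?_
    intro ω hω
    exact lt_of_lt_of_le hω (psi_mono g' N ω)
  -- B ⊆ ⋃ N, E N
  have hsub : {ω | ENNReal.ofReal lam < LS T g ω} ⊆ ⋃ N, E N := by
    intro ω hω
    have hω' : ENNReal.ofReal lam <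
        Filter.limsup (fun n : ℕ => ENNReal.ofReal (birk T g n ω) / (n : ℝ≥0∞)) atTop := hω
    have hfreq : ∃ᶠ n : ℕ in atTop,
        ENNReal.ofReal lam < ENNReal.ofReal (birk T g n ω) / (n : ℝ≥0∞) :=
      Filter.frequently_lt_of_lt_limsup (by isBoundedDefault) hω'
    obtain ⟨n, hn, hn1⟩ := (hfreq.and_eventually (eventually_ge_atTop 1)).exists
    have hn0 : (n : ℝ≥0∞) ≠ 0 := Nat.cast_ne_zero.mpr (by omega)
    have hmul : ENNReal.ofReal lam * (n : ℝ≥0∞) < ENNReal.ofReal (birk T g n ω) :=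
      (ENNReal.lt_div_iff_mul_lt (Or.inl hn0) (Or.inl (by simp))).mp hn
    have hcast : ENNReal.ofReal lam * (n : ℝ≥0∞) = ENNReal.ofReal (lam * n) := by
      rw [ENNReal.ofReal_mul hlam.le, ENNReal.ofReal_natCast]
    rw [hcast] at hmul
    have hreal : lam * n < birk T g n ω := by
      have := (ENNReal.ofReal_lt_ofReal_iff_of_nonneg
        (by positivity : (0:ℝ) ≤ lam * n)).mp hmul
      exact this
    have hbirk' : 0 < birk T g' n ω := by
      have : birk T g' n ω = birk T g n ω - n * lam := by
        simp only [birk, hg', Finset.sum_sub_distrib, Finset.sum_const,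
          Finset.card_range, nsmul_eq_mul]
      rw [this]
      nlinarith
    exact Set.mem_iUnion.mpr ⟨n, lt_of_lt_of_le hbirk' (birk_le_psi g' n ω)⟩
  have hUnion : μ (⋃ N, E N) = 1 := by
    refine le_antisymm prob_le_one ?_
    calc (1 : ℝ≥0∞) = μ {ω | ENNReal.ofReal lam < LS T g ω} := h1.symm
      _ ≤ μ (⋃ N, E N) := measure_mono hsub
  -- maximal inequality per N
  have hkey : ∀ N, lam * (μ (E N)).toReal ≤ ∫ x, g x ∂μ := by
    intro N
    have h0 := maximal hT.toMeasurePreserving hg'm hg'i N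
    have hsplit : ∫ ω in E N, g' ω ∂μ
        = (∫ ω in E N, g ω ∂μ) - lam * (μ (E N)).toReal := by
      rw [hg']
      rw [integral_sub hg.integrableOn (integrable_const lam).integrableOn]
      rw [setIntegral_const]
      simp [mul_comm, smul_eq_mul, Measure.real]
    have hle : ∫ ω in E N, g ω ∂μ ≤ ∫ x, g x ∂μ :=
      setIntegral_le_integral hg (Eventually.of_forall hg0)
    rw [hEdef] at hsplit
    nlinarith [h0, hsplit, hle]
  -- take the limit
  have htend : Tendsto (fun N => μ (E N)) atTop (𝓝 (μ (⋃ N, E N))) :=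
    tendsto_measure_iUnion_atTop hEmono
  have htendR : Tendsto (fun N => (μ (E N)).toReal) atTop (𝓝 1) := by
    rw [hUnion] at htend
    have := (ENNReal.tendsto_toReal (by simp)).comp htend
    exact this
  have : Tendsto (fun N => lam * (μ (E N)).toReal) atTop (𝓝 lam) := by
    simpa using htendR.const_mul lam
  exact le_of_tendsto this (Eventually.of_forall hkey)

lemma ergodic_limsup_le [IsProbabilityMeasure μ] (hT : Ergodic T μ) {g : Ω → ℝ}
    (hgm : Measurable g) (hg : Integrable g μ) (hg0 : ∀ ω, 0 ≤ g ω) :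
    ∀ᵐ ω ∂μ, LS T g ω ≤ ENNReal.ofReal (∫ x, g x ∂μ) := by
  have hint_nonneg : 0 ≤ ∫ x, g x ∂μ := integral_nonneg hg0
  have hq : ∀ q : ℚ, (∫ x, g x ∂μ) < (q : ℝ) →
      ∀ᵐ ω ∂μ, ¬ (ENNReal.ofReal (q : ℝ) < LS T g ω) := by
    intro q hq'
    have hqpos : 0 < (q : ℝ) := lt_of_le_of_lt hint_nonneg hq'
    set B := {ω | ENNReal.ofReal (q : ℝ) < LS T g ω} with hB
    have hBm : MeasurableSet B :=
      measurableSet_lt measurable_const (LS_measurable hT.measurable hgm)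
    have hBinv : T ⁻¹' B = B := by
      ext ω
      simp only [Set.mem_preimage, hB, Set.mem_setOf_eq, LS_comp hg0 ω]
    rcases hT.toPreErgodic.prob_eq_zero_or_one hBm hBinv with h0 | h1
    · have : ∀ᵐ ω ∂μ, ω ∉ B := by
        rw [ae_iff]
        simpa [hB] using h0
      exact this
    · exfalso
      have := lam_le hT hgm hg hg0 hqpos h1
      linarith
  -- countable intersection
  have hae : ∀ᵐ ω ∂μ, ∀ q : ℚ, (∫ x, g x ∂μ) < (q : ℝ) →
      ¬ (ENNReal.ofReal (q : ℝ) < LS T g ω) := by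
    rw [ae_all_iff]
    intro q
    by_cases h : (∫ x, g x ∂μ) < (q : ℝ)
    · filter_upwards [hq q h] with ω hω
      exact fun _ => hω
    · exact Eventually.of_forall fun ω h' => absurd h' h
  filter_upwards [hae] with ω hω
  by_contra hcon
  push_neg at hcon
  obtain ⟨q, hq0, h1, h2⟩ := ENNReal.lt_iff_exists_rat_btwn.mp hcon
  have hofq : ((Real.toNNReal (q : ℝ) : NNReal) : ℝ≥0∞) = ENNReal.ofReal (q : ℝ) := rfl
  rw [hofq] at h1 h2
  have hlt : (∫ x, g x ∂μ) < (q : ℝ) := by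
    have := (ENNReal.ofReal_lt_ofReal_iff_of_nonneg hint_nonneg).mp h1
    exact this
  exact hω q hlt h2


lemma real_rpow_add_le {p : ℝ} (hp0 : 0 < p) (hp1 : p ≤ 1) {a b : ℝ}
    (ha : 0 ≤ a) (hb : 0 ≤ b) : (a + b) ^ p ≤ a ^ p + b ^ p := by
  have h := NNReal.rpow_add_le_add_rpow a.toNNReal b.toNNReal hp0.le hp1
  have hcoe : ((a.toNNReal + b.toNNReal : NNReal) : ℝ) = a + b := by
    simp [Real.coe_toNNReal _ ha, Real.coe_toNNReal _ hb]
  calc (a + b) ^ p = (((a.toNNReal + b.toNNReal : NNReal) : ℝ)) ^ p := by rw [hcoe]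
    _ = (((a.toNNReal + b.toNNReal : NNReal) ^ p : NNReal) : ℝ) := by
        rw [NNReal.coe_rpow]
    _ ≤ ((a.toNNReal ^ p + b.toNNReal ^ p : NNReal) : ℝ) := by exact_mod_cast h
    _ = a ^ p + b ^ p := by
        push_cast [NNReal.coe_rpow, Real.coe_toNNReal _ ha, Real.coe_toNNReal _ hb]
        ring

lemma sum_rpow_le {p : ℝ} (hp0 : 0 < p) (hp1 : p ≤ 1) {ι : Type*} (s : Finset ι)
    (u : ι → ℝ) (hu : ∀ i ∈ s, 0 ≤ u i) :
    (∑ i ∈ s, u i) ^ p ≤ ∑ i ∈ s, u i ^ p := by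
  classical
  induction s using Finset.cons_induction with
  | empty => simp [Real.zero_rpow hp0.ne']
  | cons a s ha ih =>
      rw [Finset.sum_cons, Finset.sum_cons]
      have h1 : (0:ℝ) ≤ u a := hu a (Finset.mem_cons_self a s)
      have h2 : (0:ℝ) ≤ ∑ i ∈ s, u i :=
        Finset.sum_nonneg fun i hi => hu i (Finset.mem_cons_of_mem hi)
      calc (u a + ∑ i ∈ s, u i) ^ p ≤ u a ^ p + (∑ i ∈ s, u i) ^ p :=
            real_rpow_add_le hp0 hp1 h1 h2
        _ ≤ u a ^ p + ∑ i ∈ s, u i ^ p := by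
            have := ih fun i hi => hu i (Finset.mem_cons_of_mem hi)
            linarith

lemma sum_le_rpow_sum_rpow {p : ℝ} (hp0 : 0 < p) (hp1 : p ≤ 1) {ι : Type*} (s : Finset ι)
    (u : ι → ℝ) (hu : ∀ i ∈ s, 0 ≤ u i) :
    (∑ i ∈ s, u i) ≤ (∑ i ∈ s, u i ^ p) ^ (1 / p) := by
  have h2 : (0:ℝ) ≤ ∑ i ∈ s, u i := Finset.sum_nonneg hu
  have h3 := sum_rpow_le hp0 hp1 s u hu
  calc (∑ i ∈ s, u i) = ((∑ i ∈ s, u i) ^ p) ^ (1 / p) := by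
        rw [one_div, Real.rpow_rpow_inv h2 hp0.ne']
    _ ≤ (∑ i ∈ s, u i ^ p) ^ (1 / p) :=
        Real.rpow_le_rpow (Real.rpow_nonneg h2 p) h3 (by positivity)


end MZAux

open MZAux

/-- **Marcinkiewicz–Zygmund strong law:** if `f ∈ L^p` with `0 < p < 1`, the Birkhoff sums
are `o(N^{1/p})` almost everywhere. -/
theorem marcinkiewicz_zygmund_strong_law
    {Ω : Type*} [MeasurableSpace Ω] {μ : Measure Ω} [IsProbabilityMeasure μ]
    {T : Ω → Ω} (hT : Ergodic T μ)
    (p : ℝ) (hp0 : 0 < p) (hp1 : p < 1)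
    (f : Ω → ℝ) (hf : Measurable f)
    (hint : Integrable (fun ω => |f ω| ^ p) μ) :
    ∀ᵐ ω ∂μ,
      Tendsto
        (fun N : ℕ => (∑ i ∈ Finset.range N, f (T^[i] ω)) / (N : ℝ) ^ (1 / p))
        atTop (𝓝 0) := by
  classical
  -- truncated p-th power functions
  set G : ℕ → Ω → ℝ := fun M ω => if (M : ℝ) < |f ω| then |f ω| ^ p else 0 with hG
  have hGm : ∀ M, Measurable (G M) := fun M =>
    Measurable.ite (measurableSet_lt measurable_const hf.abs)
      ((Real.continuous_rpow_const hp0.le).measurable.comp hf.abs) measurable_const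
  have hG0 : ∀ M ω, 0 ≤ G M ω := by
    intro M ω
    simp only [hG]
    split
    · positivity
    · exact le_rfl
  have hGle : ∀ M ω, G M ω ≤ |f ω| ^ p := by
    intro M ω
    simp only [hG]
    split
    · exact le_rfl
    · positivity
  have hGi : ∀ M, Integrable (G M) μ := by
    intro M
    refine Integrable.mono' hint (hGm M).aestronglyMeasurable ?_
    refine Eventually.of_forall fun ω => ?_
    rw [Real.norm_eq_abs, abs_of_nonneg (hG0 M ω)]
    exact hGle M ω
  -- integrals of G M tend to 0
  have hGtend : Tendsto (fun M => ∫ x, G M x ∂μ) atTop (𝓝 0) := by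
    have h0 : (0 : ℝ) = ∫ x, (0 : ℝ) ∂μ := by simp
    rw [show (𝓝 (0:ℝ)) = 𝓝 (∫ x, (0:ℝ) ∂μ) by rw [← h0]]
    refine tendsto_integral_of_dominated_convergence (fun ω => |f ω| ^ p)
      (fun M => (hGm M).aestronglyMeasurable) hint ?_ ?_
    · intro M
      refine Eventually.of_forall fun ω => ?_
      rw [Real.norm_eq_abs, abs_of_nonneg (hG0 M ω)]
      exact hGle M ω
    · refine Eventually.of_forall fun ω => ?_
      obtain ⟨M₀, hM₀⟩ := exists_nat_gt (|f ω|)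
      refine tendsto_const_nhds.congr' ?_
      filter_upwards [eventually_ge_atTop M₀] with M hM
      have : ¬ ((M : ℝ) < |f ω|) := by
        push_neg
        calc |f ω| ≤ M₀ := hM₀.le
          _ ≤ M := by exact_mod_cast hM
      simp [hG, this]
  -- the a.e. good set
  have hae : ∀ᵐ ω ∂μ, ∀ M : ℕ, LS T (G M) ω ≤ ENNReal.ofReal (∫ x, G M x ∂μ) := by
    rw [ae_all_iff]
    intro M
    exact ergodic_limsup_le hT (hGm M) (hGi M) (hG0 M)
  filter_upwards [hae] with ω hω
  rw [NormedAddCommGroup.tendsto_nhds_zero]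
  intro ε hε
  -- choose parameters
  set δ : ℝ := (ε / 2) ^ p with hδdef
  have hδ : 0 < δ := by positivity
  obtain ⟨M, hM⟩ : ∃ M : ℕ, ∫ x, G M x ∂μ < δ :=
    ((hGtend.eventually_lt_const hδ).exists)
  -- from the limsup bound: eventually birk < δ n
  have hLS : LS T (G M) ω < ENNReal.ofReal δ :=
    lt_of_le_of_lt (hω M) ((ENNReal.ofReal_lt_ofReal_iff hδ).mpr hM)
  have hev1 : ∀ᶠ n : ℕ in atTop,
      ENNReal.ofReal (birk T (G M) n ω) / (n : ℝ≥0∞) < ENNReal.ofReal δ :=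
    eventually_lt_of_limsup_lt hLS
  -- eventually the M-term is small
  have hterm : Tendsto (fun N : ℕ => (M : ℝ) * (N : ℝ) ^ (1 - 1 / p)) atTop (𝓝 0) := by
    have hexp : (0:ℝ) < 1 / p - 1 := by
      rw [lt_sub_iff_add_lt, zero_add]
      rw [lt_div_iff₀ hp0, one_mul]
      exact hp1
    have h1 : Tendsto (fun x : ℝ => x ^ (-(1 / p - 1))) atTop (𝓝 0) :=
      tendsto_rpow_neg_atTop hexp
    have h2 : Tendsto (fun N : ℕ => ((N : ℝ)) ^ (1 - 1/p)) atTop (𝓝 0) := by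
      have := h1.comp tendsto_natCast_atTop_atTop (α := ℕ)
      refine this.congr fun N => ?_
      simp [Function.comp]
    simpa using h2.const_mul (M : ℝ)
  have hev2 : ∀ᶠ N : ℕ in atTop, (M : ℝ) * (N : ℝ) ^ (1 - 1 / p) < ε / 2 :=
    hterm.eventually_lt_const (by linarith)
  filter_upwards [hev1, hev2, eventually_ge_atTop 1] with N hN1 hN2 hNge
  have hNpos : (0:ℝ) < (N:ℝ) := by exact_mod_cast Nat.lt_of_lt_of_le Nat.zero_lt_one hNge
  have hNrpos : (0:ℝ) < (N:ℝ) ^ (1/p) := Real.rpow_pos_of_pos hNpos _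
  -- birk bound in real terms
  have hbirk : birk T (G M) N ω < δ * N := by
    have hn0 : (N : ℝ≥0∞) ≠ 0 := Nat.cast_ne_zero.mpr (by omega)
    have := (ENNReal.div_lt_iff (Or.inl hn0) (Or.inl (by simp))).mp hN1
    have hcast : ENNReal.ofReal δ * (N : ℝ≥0∞) = ENNReal.ofReal (δ * N) := by
      rw [ENNReal.ofReal_mul hδ.le, ENNReal.ofReal_natCast]
    rw [hcast] at this
    exact (ENNReal.ofReal_lt_ofReal_iff_of_nonneg (birk_nonneg (hG0 M) N ω)).mp this
  -- pointwise estimate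
  set A := ∑ i ∈ Finset.range N, f (T^[i] ω) with hA
  set H : Ω → ℝ := fun x => if (M : ℝ) < |f x| then |f x| else 0 with hH
  have hH0 : ∀ x, 0 ≤ H x := by
    intro x
    simp only [hH]
    split
    · positivity
    · exact le_rfl
  have hHpow : ∀ x, H x ^ p = G M x := by
    intro x
    simp only [hH, hG]
    split
    · rfl
    · exact Real.zero_rpow hp0.ne'
  have habs : |A| ≤ (N : ℝ) * M + (ε/2) * (N:ℝ) ^ (1/p) := by
    have h1 : |A| ≤ ∑ i ∈ Finset.range N, |f (T^[i] ω)| := Finset.abs_sum_le_sum_abs _ _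
    have h2 : ∀ i ∈ Finset.range N, |f (T^[i] ω)| ≤ (M : ℝ) + H (T^[i] ω) := by
      intro i _
      by_cases h : (M : ℝ) < |f (T^[i] ω)|
      · simp only [hH, if_pos h]
        linarith [Nat.cast_nonneg (α := ℝ) M]
      · simp only [hH, if_neg h]
        push_neg at h
        linarith [abs_nonneg (f (T^[i] ω))]
    have h3 : ∑ i ∈ Finset.range N, |f (T^[i] ω)| ≤
        (N : ℝ) * M + ∑ i ∈ Finset.range N, H (T^[i] ω) := by
      calc ∑ i ∈ Finset.range N, |f (T^[i] ω)|
          ≤ ∑ i ∈ Finset.range N, ((M : ℝ) + H (T^[i] ω)) := Finset.sum_le_sum h2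
        _ = (N : ℝ) * M + ∑ i ∈ Finset.range N, H (T^[i] ω) := by
            rw [Finset.sum_add_distrib, Finset.sum_const, Finset.card_range, nsmul_eq_mul]
    have h4 : ∑ i ∈ Finset.range N, H (T^[i] ω) ≤ (birk T (G M) N ω) ^ (1/p) := by
      have := sum_le_rpow_sum_rpow hp0 hp1.le (Finset.range N)
        (fun i => H (T^[i] ω)) (fun i _ => hH0 _)
      convert this using 3
      · rw [birk]
        congr 1
        ext i
        rw [hHpow]
      -- orientation fix below if needed
    have h5 : (birk T (G M) N ω) ^ (1/p) ≤ (δ * N) ^ (1/p) :=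
      Real.rpow_le_rpow (birk_nonneg (hG0 M) N ω) hbirk.le (by positivity)
    have h6 : (δ * N) ^ (1/p) = (ε/2) * (N:ℝ) ^ (1/p) := by
      rw [Real.mul_rpow hδ.le hNpos.le, hδdef, one_div,
        Real.rpow_rpow_inv (by positivity) hp0.ne']
    calc |A| ≤ ∑ i ∈ Finset.range N, |f (T^[i] ω)| := h1
      _ ≤ (N : ℝ) * M + ∑ i ∈ Finset.range N, H (T^[i] ω) := h3
      _ ≤ (N : ℝ) * M + (birk T (G M) N ω) ^ (1/p) := by linarith
      _ ≤ (N : ℝ) * M + (δ * N) ^ (1/p) := by linarith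
      _ = (N : ℝ) * M + (ε/2) * (N:ℝ) ^ (1/p) := by rw [h6]
  -- final computation
  have hNdiv : (N : ℝ) * M / (N:ℝ) ^ (1/p) = (M : ℝ) * (N:ℝ) ^ (1 - 1/p) := by
    rw [Real.rpow_sub hNpos, Real.rpow_one]
    field_simp
  calc ‖A / (N : ℝ) ^ (1/p)‖ = |A| / (N:ℝ) ^ (1/p) := by
        rw [Real.norm_eq_abs, abs_div, abs_of_nonneg hNrpos.le]
    _ ≤ ((N : ℝ) * M + (ε/2) * (N:ℝ) ^ (1/p)) / (N:ℝ) ^ (1/p) := by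
        exact div_le_div_of_nonneg_right habs hNrpos.le
    _ = (N : ℝ) * M / (N:ℝ) ^ (1/p) + ε/2 := by
        rw [add_div]
        congr 1
        rw [mul_div_assoc, div_self hNrpos.ne', mul_one]
    _ = (M : ℝ) * (N:ℝ) ^ (1 - 1/p) + ε/2 := by rw [hNdiv]
    _ < ε/2 + ε/2 := by linarith
    _ = ε := by ring
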